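/- Let Y_t be the set of conjugacy classes of SL₂(ℤ) of trace t, and X_{t,n} the set of conjugacy classes of B₃ of trace t and exponent sum n (as defined via φ and ε). Then for any integers t and n, the map induced by φ gives a bijection from the disjoint union ∐_{j=0}^{11} X_{t,n+j} onto Y_t. In particular the restriction of the induced map φ₊: X_{t,n} → Y_t is injective for each fixed n. -/

import Mathlib

open Matrix

abbrev SL2Z := Matrix.SpecialLinearGroup (Fin 2) ℤ

def braidRels : Set (FreeGroup Bool) :=
  {FreeGroup.of true * FreeGroup.of false * FreeGroup.of true *
    (FreeGroup.of false * FreeGroup.of true * FreeGroup.of false)⁻¹}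

abbrev B3 := PresentedGroup braidRels

def σ₁ : B3 := PresentedGroup.of true
def σ₂ : B3 := PresentedGroup.of false
def Δ : B3 := σ₁ * σ₂ * σ₁

def S : SL2Z := ⟨!![1, 1; 0, 1], by norm_num [Matrix.det_fin_two_of]⟩
def T : SL2Z := ⟨!![1, 0; -1, 1], by norm_num [Matrix.det_fin_two_of]⟩

lemma STS_eq_TST : S * T * S = T * S * T := by
  ext i j
  fin_cases i <;> fin_cases j <;> rfl

def φ : B3 →* SL2Z :=
  PresentedGroup.toGroup (f := fun b => if b then S else T) (by
    intro r hr
    simp only [braidRels, Set.mem_singleton_iff] at hr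
    subst hr
    simp only [_root_.map_mul, _root_.map_inv, FreeGroup.lift_apply_of, if_true, if_false]
    rw [mul_inv_eq_one]
    exact STS_eq_TST)

def ε : B3 →* Multiplicative ℤ :=
  PresentedGroup.toGroup (f := fun _ => Multiplicative.ofAdd (1 : ℤ)) (by
    intro r hr
    simp only [braidRels, Set.mem_singleton_iff] at hr
    subst hr
    simp only [_root_.map_mul, _root_.map_inv, FreeGroup.lift_apply_of]
    group)

def expSum (g : B3) : ℤ := Multiplicative.toAdd (ε g)

def trB (g : B3) : ℤ := Matrix.trace (φ g : Matrix (Fin 2) (Fin 2) ℤ)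

/-! ### Matrices -/

def Rm : SL2Z := S * T * S
def Um : SL2Z := S * T
def W : SL2Z := ⟨!![-1, 0; 0, -1], by norm_num [Matrix.det_fin_two_of]⟩

lemma Rm_coe : (Rm : Matrix (Fin 2) (Fin 2) ℤ) = !![0, 1; -1, 0] := by
  ext i j
  fin_cases i <;> fin_cases j <;> rfl

lemma Um_coe : (Um : Matrix (Fin 2) (Fin 2) ℤ) = !![0, 1; -1, 1] := by
  ext i j
  fin_cases i <;> fin_cases j <;> rfl

lemma Um2_coe : ((Um ^ 2 : SL2Z) : Matrix (Fin 2) (Fin 2) ℤ) = !![-1, 1; -1, 0] := by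
  have : ((Um ^ 2 : SL2Z) : Matrix (Fin 2) (Fin 2) ℤ) =
      (Um : Matrix (Fin 2) (Fin 2) ℤ) * (Um : Matrix (Fin 2) (Fin 2) ℤ) := by
    rw [pow_two]; rfl
  rw [this, Um_coe]
  ext i j
  fin_cases i <;> fin_cases j <;> simp [Matrix.mul_apply, Fin.sum_univ_succ]

lemma Rm_sq : Rm ^ 2 = W := by
  ext i j
  have : ((Rm ^ 2 : SL2Z) : Matrix (Fin 2) (Fin 2) ℤ) =
      (Rm : Matrix (Fin 2) (Fin 2) ℤ) * (Rm : Matrix (Fin 2) (Fin 2) ℤ) := by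
    rw [pow_two]; rfl
  rw [this, Rm_coe]
  fin_cases i <;> fin_cases j <;> simp [W, Matrix.mul_apply, Fin.sum_univ_succ]

lemma Um_cube : Um ^ 3 = W := by
  ext i j
  have : ((Um ^ 3 : SL2Z) : Matrix (Fin 2) (Fin 2) ℤ) =
      ((Um ^ 2 : SL2Z) : Matrix (Fin 2) (Fin 2) ℤ) * (Um : Matrix (Fin 2) (Fin 2) ℤ) := by
    rw [pow_succ]; rfl
  rw [this, Um2_coe, Um_coe]
  fin_cases i <;> fin_cases j <;> simp [W, Matrix.mul_apply, Fin.sum_univ_succ]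

lemma W_sq : W ^ 2 = 1 := by
  ext i j
  have : ((W ^ 2 : SL2Z) : Matrix (Fin 2) (Fin 2) ℤ) =
      (W : Matrix (Fin 2) (Fin 2) ℤ) * (W : Matrix (Fin 2) (Fin 2) ℤ) := by
    rw [pow_two]; rfl
  rw [this]
  fin_cases i <;> fin_cases j <;>
    simp [W, Matrix.mul_apply, Fin.sum_univ_succ, Matrix.SpecialLinearGroup.coe_one]

lemma W_ne_one : W ≠ 1 := by
  intro h
  have := congrArg (fun g : SL2Z => (g : Matrix (Fin 2) (Fin 2) ℤ) 0 0) h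
  simp [W, Matrix.SpecialLinearGroup.coe_one] at this

lemma W_central : ∀ g : SL2Z, g * W = W * g := by
  intro g
  ext i j
  show ((g : Matrix (Fin 2) (Fin 2) ℤ) * W) i j = ((W : Matrix (Fin 2) (Fin 2) ℤ) * g) i j
  fin_cases i <;> fin_cases j <;>
    simp [W, Matrix.mul_apply, Fin.sum_univ_succ]

/-! ### B3 words -/

lemma braid : σ₁ * σ₂ * σ₁ = σ₂ * σ₁ * σ₂ := by
  have h : PresentedGroup.mk braidRels (FreeGroup.of true * FreeGroup.of false * FreeGroup.of true *
      (FreeGroup.of false * FreeGroup.of true * FreeGroup.of false)⁻¹) = 1 := by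
    apply (QuotientGroup.eq_one_iff _).mpr
    exact Subgroup.subset_normalClosure rfl
  rw [_root_.map_mul, map_inv, mul_inv_eq_one] at h
  simp only [_root_.map_mul] at h
  exact h

lemma phi_σ₁ : φ σ₁ = S := by simp [φ, σ₁, PresentedGroup.toGroup.of]
lemma phi_σ₂ : φ σ₂ = T := by simp [φ, σ₂, PresentedGroup.toGroup.of]
lemma phi_Δ : φ Δ = Rm := by simp [Δ, _root_.map_mul, phi_σ₁, phi_σ₂, Rm]
lemma phi_Δsq : φ (Δ ^ 2) = W := by rw [map_pow, phi_Δ, Rm_sq]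

lemma expSum_σ₁ : expSum σ₁ = 1 := by simp [expSum, ε, σ₁, PresentedGroup.toGroup.of]
lemma expSum_Δ : expSum Δ = 3 := by
  simp [expSum, Δ, _root_.map_mul, ε, σ₁, σ₂, PresentedGroup.toGroup.of]

lemma Δ_σ₁ : Δ * σ₁ = σ₂ * Δ := by
  have h : σ₂ * Δ = σ₂ * σ₁ * σ₂ * σ₁ := by simp only [Δ]; group
  rw [h, ← braid]; rfl

lemma Δ_σ₂ : Δ * σ₂ = σ₁ * Δ := by
  have h : Δ * σ₂ = σ₁ * (σ₂ * σ₁ * σ₂) := by simp only [Δ]; group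
  rw [h, ← braid]; rfl

lemma Δsq_central : ∀ g : B3, Δ ^ 2 * g = g * Δ ^ 2 := by
  have h1 : Δ ^ 2 * σ₁ = σ₁ * Δ ^ 2 := by
    rw [pow_two, mul_assoc, Δ_σ₁, ← mul_assoc, Δ_σ₂, mul_assoc]
  have h2 : Δ ^ 2 * σ₂ = σ₂ * Δ ^ 2 := by
    rw [pow_two, mul_assoc, Δ_σ₂, ← mul_assoc, Δ_σ₁, mul_assoc]
  intro g
  have hg : g ∈ Subgroup.centralizer {Δ ^ 2} := by
    have hle : (⊤ : Subgroup B3) ≤ Subgroup.centralizer {Δ ^ 2} := by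
      rw [← PresentedGroup.closure_range_of braidRels]
      apply Subgroup.closure_le _ |>.mpr
      rintro x ⟨b, rfl⟩
      cases b
      · intro y hy
        simp only [Set.mem_singleton_iff] at hy
        subst hy
        exact h2
      · intro y hy
        simp only [Set.mem_singleton_iff] at hy
        subst hy
        exact h1
    exact hle trivial
  exact hg (Δ ^ 2) rfl

/-! ### PSL₂(ℤ) -/

lemma W_eq_neg_one : W = -(1 : SL2Z) := by
  ext i j
  fin_cases i <;> fin_cases j <;>
    simp [W, Matrix.SpecialLinearGroup.coe_neg, Matrix.SpecialLinearGroup.coe_one]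

def negSub : Subgroup SL2Z := Subgroup.zpowers W

lemma W_zpow_two : W ^ (2 : ℤ) = 1 := by
  rw [show (2:ℤ) = ((2:ℕ):ℤ) from rfl, zpow_natCast, W_sq]

instance negSub_normal : (negSub).Normal := by
  constructor
  intro x hx g
  rcases Subgroup.mem_zpowers_iff.mp hx with ⟨k, rfl⟩
  have hc : Commute g W := W_central g
  have : g * W ^ k * g⁻¹ = W ^ k := by
    rw [(hc.zpow_right k).eq, mul_assoc, mul_inv_cancel, mul_one]
  rw [this]
  exact Subgroup.zpow_mem _ (Subgroup.mem_zpowers W) k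

lemma mem_negSub {x : SL2Z} : x ∈ negSub ↔ x = 1 ∨ x = W := by
  constructor
  · intro hx
    rcases Subgroup.mem_zpowers_iff.mp hx with ⟨k, rfl⟩
    rcases Int.even_or_odd k with ⟨m, hm⟩ | ⟨m, hm⟩
    · left
      subst hm
      rw [← two_mul, _root_.zpow_mul, W_zpow_two, _root_.one_zpow]
    · right
      subst hm
      rw [_root_.zpow_add, _root_.zpow_mul, W_zpow_two, _root_.one_zpow, one_mul, zpow_one]
  · rintro (rfl | rfl)
    · exact one_mem _
    · exact Subgroup.mem_zpowers W

abbrev PSL := SL2Z ⧸ negSub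

def π : SL2Z →* PSL := QuotientGroup.mk' negSub

lemma π_surjective : Function.Surjective π := QuotientGroup.mk'_surjective negSub

lemma π_eq_one_iff {x : SL2Z} : π x = 1 ↔ x = 1 ∨ x = W := by
  rw [π, QuotientGroup.mk'_apply, QuotientGroup.eq_one_iff, mem_negSub]

lemma W_smul (z : UpperHalfPlane) : W • z = z := by
  rw [W_eq_neg_one, ModularGroup.SL_neg_smul (1 : SL2Z) z]
  exact MulAction.one_smul z

noncomputable def pslPerm : PSL →* Equiv.Perm UpperHalfPlane :=
  QuotientGroup.lift negSub (MulAction.toPermHom SL2Z UpperHalfPlane) (by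
    intro x hx
    rcases mem_negSub.mp hx with rfl | rfl
    · exact map_one _
    · ext z
      simp only [MulAction.toPermHom_apply, MulAction.toPerm_apply, Equiv.Perm.coe_one, id_eq]
      exact congrArg _ (W_smul z))

noncomputable instance pslAction : MulAction PSL UpperHalfPlane :=
  MulAction.compHom UpperHalfPlane pslPerm

lemma π_smul (g : SL2Z) (z : UpperHalfPlane) : (π g) • z = g • z := rfl

/-! ### Moebius real part computations -/

open UpperHalfPlane Complex

lemma smul_coe (g : SL2Z) (z : ℍ) : ((g • z : ℍ) : ℂ) =
    (((g : Matrix (Fin 2) (Fin 2) ℤ) 0 0 : ℂ) * z + ((g : Matrix (Fin 2) (Fin 2) ℤ) 0 1 : ℂ)) /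
      (((g : Matrix (Fin 2) (Fin 2) ℤ) 1 0 : ℂ) * z + ((g : Matrix (Fin 2) (Fin 2) ℤ) 1 1 : ℂ)) := by
  rw [UpperHalfPlane.specialLinearGroup_apply]
  simp only [UpperHalfPlane.coe_mk]
  norm_cast

lemma z_ne_zero (z : ℍ) : (z : ℂ) ≠ 0 := by
  intro h
  have := z.im_pos
  rw [UpperHalfPlane.im, h] at this
  simp at this

lemma normSq_z_pos (z : ℍ) : 0 < Complex.normSq (z : ℂ) := normSq_pos.mpr (z_ne_zero z)

lemma one_sub_z_ne_zero (z : ℍ) : (1 : ℂ) - (z : ℂ) ≠ 0 := by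
  intro h
  have h2 : (z : ℂ) = 1 := by linear_combination -h
  have := z.im_pos
  rw [UpperHalfPlane.im, h2] at this
  simp at this

lemma Rm_maps (z : ℍ) (h : 0 < (z : ℂ).re) : ((Rm • z : ℍ) : ℂ).re < 0 := by
  have hc : ((Rm • z : ℍ) : ℂ) = -((z : ℂ)⁻¹) := by
    rw [smul_coe, Rm_coe]
    simp
  rw [hc]
  simp only [Complex.neg_re, Complex.inv_re]
  have := normSq_z_pos z
  have : 0 < (z:ℂ).re / Complex.normSq (z:ℂ) := by positivity
  linarith

lemma Um_maps (z : ℍ) (h : (z : ℂ).re < 0) : 0 < ((Um • z : ℍ) : ℂ).re := by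
  have hc : ((Um • z : ℍ) : ℂ) = ((1 : ℂ) - (z:ℂ))⁻¹ := by
    rw [smul_coe, Um_coe]
    simp
    rw [neg_add_eq_sub]
  rw [hc]
  rw [Complex.inv_re]
  have h1 : 0 < Complex.normSq ((1:ℂ) - z) := normSq_pos.mpr (one_sub_z_ne_zero z)
  have h2 : 0 < ((1:ℂ) - (z:ℂ)).re := by
    simp only [Complex.sub_re, Complex.one_re]
    linarith
  positivity

lemma Um2_maps (z : ℍ) (h : (z : ℂ).re < 0) : 0 < (((Um ^ 2) • z : ℍ) : ℂ).re := by
  have hc : (((Um ^ 2) • z : ℍ) : ℂ) = 1 - ((z : ℂ))⁻¹ := by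
    rw [smul_coe, Um2_coe]
    simp
    rw [div_eq_iff (neg_ne_zero.mpr (z_ne_zero z)), sub_mul, one_mul]
    rw [mul_neg, inv_mul_cancel₀ (z_ne_zero z)]
    ring
  rw [hc]
  simp only [Complex.sub_re, Complex.one_re, Complex.inv_re]
  have h1 := normSq_z_pos z
  have h2 : (z:ℂ).re / Complex.normSq (z:ℂ) ≤ 0 := by
    apply div_nonpos_of_nonpos_of_nonneg (le_of_lt h) (le_of_lt h1)
  linarith

open Pointwise in
/-! ### Cyclic homs -/

def cycHom {G : Type*} [Group G] {n : ℕ} (g : G) (hg : g ^ n = 1) :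
    Multiplicative (ZMod n) →* G :=
  AddMonoidHom.toMultiplicativeLeft (ZMod.lift n ⟨zmultiplesHom (Additive G) (Additive.ofMul g), by
    show ((n : ℤ) • (Additive.ofMul g)) = 0
    rw [← ofMul_zpow, zpow_natCast, hg]
    rfl⟩)

lemma cycHom_int {G : Type*} [Group G] {n : ℕ} (g : G) (hg : g ^ n = 1) (k : ℤ) :
    cycHom g hg (Multiplicative.ofAdd ((k : ℤ) : ZMod n)) = g ^ k := by
  suffices h : ∀ (F : {f : ℤ →+ Additive G // f n = 0}),
      F.val = zmultiplesHom (Additive G) (Additive.ofMul g) →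
      AddMonoidHom.toMultiplicativeLeft (ZMod.lift n F) (Multiplicative.ofAdd ((k : ℤ) : ZMod n))
        = g ^ k by
    exact h _ rfl
  intro F hF
  show Additive.toMul ((ZMod.lift n F) (Multiplicative.toAdd (Multiplicative.ofAdd ((k : ℤ) : ZMod n)))) = g ^ k
  rw [toAdd_ofAdd, ZMod.lift_coe, hF]
  show Additive.toMul ((k : ℤ) • Additive.ofMul g) = g ^ k
  rw [← ofMul_zpow]
  rfl

/-! ### The free product C2 * C3 -/

abbrev Hfam : Bool → Type := fun i => Multiplicative (ZMod (Bool.rec 3 2 i))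

lemma pRm_sq : (π Rm) ^ 2 = 1 := by
  rw [← map_pow, Rm_sq]
  exact π_eq_one_iff.mpr (Or.inr rfl)

lemma pUm_cube : (π Um) ^ 3 = 1 := by
  rw [← map_pow, Um_cube]
  exact π_eq_one_iff.mpr (Or.inr rfl)

def fPSL : ∀ i, Hfam i →* PSL := fun i => match i with
  | true => cycHom (π Rm) pRm_sq
  | false => cycHom (π Um) pUm_cube

noncomputable def liftφ : Monoid.CoprodI Hfam →* PSL := Monoid.CoprodI.lift fPSL

def Xpp : Bool → Set UpperHalfPlane := fun i =>
  if i then {z | (z : ℂ).re < 0} else {z | 0 < (z : ℂ).re}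

open Pointwise in
lemma liftφ_inj : Function.Injective liftφ := by
  apply Monoid.CoprodI.lift_injective_of_ping_pong fPSL _ Xpp
  · intro i
    cases i
    · refine ⟨⟨1 + Complex.I, by simp⟩, ?_⟩
      show (0:ℝ) < ((1 : ℂ) + Complex.I).re
      norm_num
    · refine ⟨⟨-1 + Complex.I, by simp⟩, ?_⟩
      show ((-1 : ℂ) + Complex.I).re < 0
      norm_num
  · have key : ∀ z : UpperHalfPlane, z ∈ Xpp true → z ∈ Xpp false → False := by
      intro z h1 h2
      simp [Xpp] at h1 h2
      linarith
    intro i j hij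
    cases i <;> cases j
    · exact absurd rfl hij
    · exact Set.disjoint_left.mpr (fun z hz hz2 => key z hz2 hz)
    · exact Set.disjoint_left.mpr (fun z hz hz2 => key z hz hz2)
    · exact absurd rfl hij
  · have hsub : ∀ g : SL2Z,
        (∀ z : UpperHalfPlane, (z:ℂ).re < 0 → 0 < ((g • z : UpperHalfPlane):ℂ).re) →
        (π g) • Xpp true ⊆ Xpp false := by
      intro g hg
      rintro _ ⟨z, hz, rfl⟩
      simp [Xpp] at hz ⊢
      rw [π_smul]
      exact hg z hz
    have hsub2 : ∀ g : SL2Z,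
        (∀ z : UpperHalfPlane, 0 < (z:ℂ).re → ((g • z : UpperHalfPlane):ℂ).re < 0) →
        (π g) • Xpp false ⊆ Xpp true := by
      intro g hg
      rintro _ ⟨z, hz, rfl⟩
      simp [Xpp] at hz ⊢
      rw [π_smul]
      exact hg z hz
    intro i j hij
    cases i <;> cases j
    · exact absurd rfl hij
    -- i = false (C3), j = true
    · intro h hne
      have hcases : h = Multiplicative.ofAdd (((1:ℤ) : ZMod 3)) ∨
          h = Multiplicative.ofAdd (((2:ℤ) : ZMod 3)) := by
        revert hne
        revert h
        exact (by decide :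
          ∀ h : Multiplicative (ZMod 3), h ≠ 1 → h = Multiplicative.ofAdd (((1:ℤ) : ZMod 3)) ∨
            h = Multiplicative.ofAdd (((2:ℤ) : ZMod 3)))
      rcases hcases with rfl | rfl
      · show (fPSL false) (Multiplicative.ofAdd (((1:ℤ) : ZMod 3))) • Xpp true ⊆ Xpp false
        have e : (fPSL false) (Multiplicative.ofAdd (((1:ℤ) : ZMod 3))) = π Um :=
          (cycHom_int (π Um) pUm_cube 1).trans (zpow_one _)
        rw [e]
        exact hsub Um Um_maps
      · show (fPSL false) (Multiplicative.ofAdd (((2:ℤ) : ZMod 3))) • Xpp true ⊆ Xpp false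
        have e : (fPSL false) (Multiplicative.ofAdd (((2:ℤ) : ZMod 3))) = π (Um ^ 2) :=
          (cycHom_int (π Um) pUm_cube 2).trans
            (by rw [show (2:ℤ) = ((2:ℕ):ℤ) from rfl, zpow_natCast, map_pow])
        rw [e]
        exact hsub (Um ^ 2) Um2_maps
    -- i = true (C2), j = false
    · intro h hne
      have hcase : h = Multiplicative.ofAdd (((1:ℤ) : ZMod 2)) := by
        revert hne
        revert h
        exact (by decide :
          ∀ h : Multiplicative (ZMod 2), h ≠ 1 → h = Multiplicative.ofAdd (((1:ℤ) : ZMod 2)))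
      subst hcase
      show (fPSL true) (Multiplicative.ofAdd (((1:ℤ) : ZMod 2))) • Xpp false ⊆ Xpp true
      have e : (fPSL true) (Multiplicative.ofAdd (((1:ℤ) : ZMod 2))) = π Rm :=
        (cycHom_int (π Rm) pRm_sq 1).trans (zpow_one _)
      rw [e]
      exact hsub2 Rm Rm_maps
    · exact absurd rfl hij
  · right
    exact ⟨false, by rw [show Hfam false = Multiplicative (ZMod 3) from rfl, Cardinal.mk_fintype]; simp⟩

/-! ### The quotient presentation Q = ⟨a,b | braid, (aba)²⟩ -/

def DW : FreeGroup Bool := FreeGroup.of true * FreeGroup.of false * FreeGroup.of true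

def qRels : Set (FreeGroup Bool) := braidRels ∪ {DW ^ 2}

abbrev Q := PresentedGroup qRels

def σQ₁ : Q := PresentedGroup.of true
def σQ₂ : Q := PresentedGroup.of false
def ΔQ : Q := σQ₁ * σQ₂ * σQ₁

lemma mk_lift {rels : Set (FreeGroup Bool)} (x : FreeGroup Bool) :
    FreeGroup.lift (fun b => (PresentedGroup.of b : PresentedGroup rels)) x =
      PresentedGroup.mk rels x :=
  (FreeGroup.lift_unique (PresentedGroup.mk rels) (fun _ => rfl)).symm

lemma relQ_one : ∀ r ∈ qRels, FreeGroup.lift (fun b => (PresentedGroup.of b : Q)) r = 1 := by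
  intro r hr
  rw [mk_lift]
  exact (QuotientGroup.eq_one_iff _).mpr (Subgroup.subset_normalClosure hr)

def qh : B3 →* Q :=
  PresentedGroup.toGroup (f := fun b => (PresentedGroup.of b : Q))
    (fun r hr => relQ_one r (Or.inl hr))

lemma qh_σ₁ : qh σ₁ = σQ₁ := by simp [qh, σ₁, σQ₁, PresentedGroup.toGroup.of]
lemma qh_σ₂ : qh σ₂ = σQ₂ := by simp [qh, σ₂, σQ₂, PresentedGroup.toGroup.of]
lemma qh_Δ : qh Δ = ΔQ := by simp [Δ, ΔQ, _root_.map_mul, qh_σ₁, qh_σ₂]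

lemma braidQ : σQ₁ * σQ₂ * σQ₁ = σQ₂ * σQ₁ * σQ₂ := by
  have h : PresentedGroup.mk qRels (FreeGroup.of true * FreeGroup.of false * FreeGroup.of true *
      (FreeGroup.of false * FreeGroup.of true * FreeGroup.of false)⁻¹) = 1 := by
    apply (QuotientGroup.eq_one_iff _).mpr
    exact Subgroup.subset_normalClosure (Or.inl rfl)
  rw [_root_.map_mul, map_inv, mul_inv_eq_one] at h
  simp only [_root_.map_mul] at h
  exact h

lemma ΔQ_sq : ΔQ ^ 2 = 1 := by
  have h : PresentedGroup.mk qRels (DW ^ 2) = 1 := by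
    apply (QuotientGroup.eq_one_iff _).mpr
    exact Subgroup.subset_normalClosure (Or.inr rfl)
  rw [map_pow, DW, _root_.map_mul, _root_.map_mul] at h
  exact h

lemma YQ_cube : (σQ₁ * σQ₂) ^ 3 = 1 := by
  have h : (σQ₁ * σQ₂) ^ 3 = (σQ₁ * σQ₂ * σQ₁) * (σQ₂ * σQ₁ * σQ₂) := by
    rw [pow_succ, pow_two]
    group
  rw [h, ← braidQ, ← pow_two]
  exact ΔQ_sq

/-! ### Maps between Q and the free product -/

def Agen : Monoid.CoprodI Hfam := Monoid.CoprodI.of (i := true) (Multiplicative.ofAdd ((1:ℤ) : ZMod 2))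
def Bgen : Monoid.CoprodI Hfam := Monoid.CoprodI.of (i := false) (Multiplicative.ofAdd ((1:ℤ) : ZMod 3))

lemma Agen_sq : Agen * Agen = 1 := by
  rw [Agen, ← _root_.map_mul]
  have h : (Multiplicative.ofAdd ((1:ℤ) : ZMod 2)) * (Multiplicative.ofAdd ((1:ℤ) : ZMod 2)) = 1 := by
    decide
  rw [h, _root_.map_one]

lemma Bgen_cube : Bgen * Bgen * Bgen = 1 := by
  rw [Bgen, ← _root_.map_mul, ← _root_.map_mul]
  have h : (Multiplicative.ofAdd ((1:ℤ) : ZMod 3)) * (Multiplicative.ofAdd ((1:ℤ) : ZMod 3)) *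
      (Multiplicative.ofAdd ((1:ℤ) : ZMod 3)) = 1 := by decide
  rw [h, _root_.map_one]

lemma Agen_inv : Agen⁻¹ = Agen := (inv_eq_of_mul_eq_one_right Agen_sq).symm

def pQ : Q →* Monoid.CoprodI Hfam :=
  PresentedGroup.toGroup
    (f := fun b => cond b (Bgen⁻¹ * Agen) (Agen⁻¹ * (Bgen * Bgen))) (by
    intro r hr
    rcases hr with hr | hr
    · simp only [braidRels, Set.mem_singleton_iff] at hr
      subst hr
      simp only [_root_.map_mul, _root_.map_inv, FreeGroup.lift_apply_of, Bool.cond_true,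
        Bool.cond_false]
      rw [mul_inv_eq_one]
      have e2 : (Agen⁻¹ * (Bgen * Bgen)) * (Bgen⁻¹ * Agen) * (Agen⁻¹ * (Bgen * Bgen)) =
          Agen⁻¹ * (Bgen * Bgen * Bgen) := by group
      have e1 : (Bgen⁻¹ * Agen) * (Agen⁻¹ * (Bgen * Bgen)) * (Bgen⁻¹ * Agen) = Agen := by group
      rw [e1, e2, Bgen_cube, mul_one]
      exact Agen_inv.symm
    · simp only [Set.mem_singleton_iff] at hr
      subst hr
      rw [map_pow, DW]
      simp only [_root_.map_mul, FreeGroup.lift_apply_of, Bool.cond_true, Bool.cond_false]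
      have e1 : (Bgen⁻¹ * Agen) * (Agen⁻¹ * (Bgen * Bgen)) * (Bgen⁻¹ * Agen) = Agen := by group
      rw [e1, pow_two, Agen_sq])

lemma pQ_σQ₁ : pQ σQ₁ = Bgen⁻¹ * Agen := by simp [pQ, σQ₁, PresentedGroup.toGroup.of]
lemma pQ_σQ₂ : pQ σQ₂ = Agen⁻¹ * (Bgen * Bgen) := by simp [pQ, σQ₂, PresentedGroup.toGroup.of]

noncomputable def ρc : Monoid.CoprodI Hfam →* Q :=
  Monoid.CoprodI.lift (fun i => match i with
    | true => cycHom ΔQ ΔQ_sq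
    | false => cycHom (σQ₁ * σQ₂) YQ_cube)

lemma ρc_Agen : ρc Agen = ΔQ := by
  rw [ρc, Agen, Monoid.CoprodI.lift_of]
  exact (cycHom_int ΔQ ΔQ_sq 1).trans (zpow_one _)

lemma ρc_Bgen : ρc Bgen = σQ₁ * σQ₂ := by
  rw [ρc, Bgen, Monoid.CoprodI.lift_of]
  exact (cycHom_int (σQ₁ * σQ₂) YQ_cube 1).trans (zpow_one _)

lemma ρc_pQ (x : Q) : ρc (pQ x) = x := by
  have h : ρc.comp pQ = MonoidHom.id Q := by
    apply PresentedGroup.ext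
    intro b
    cases b
    · show ρc (pQ σQ₂) = σQ₂
      rw [pQ_σQ₂, _root_.map_mul, _root_.map_mul, map_inv, ρc_Agen, ρc_Bgen]
      show ΔQ⁻¹ * ((σQ₁ * σQ₂) * (σQ₁ * σQ₂)) = σQ₂
      rw [ΔQ]
      group
    · show ρc (pQ σQ₁) = σQ₁
      rw [pQ_σQ₁, _root_.map_mul, map_inv, ρc_Agen, ρc_Bgen]
      show (σQ₁ * σQ₂)⁻¹ * ΔQ = σQ₁
      rw [ΔQ]
      group
  exact DFunLike.congr_fun h x

/-! ### Kernel of φ -/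

instance zpowΔsq_normal : (Subgroup.zpowers (Δ ^ 2)).Normal := by
  constructor
  intro x hx g
  rcases Subgroup.mem_zpowers_iff.mp hx with ⟨k, rfl⟩
  have hc : Commute g (Δ ^ 2) := (Δsq_central g).symm
  have h : g * (Δ ^ 2) ^ k * g⁻¹ = (Δ ^ 2) ^ k := by
    rw [(hc.zpow_right k).eq, mul_assoc, mul_inv_cancel, mul_one]
  rw [h]
  exact Subgroup.zpow_mem _ (Subgroup.mem_zpowers _) k

lemma Um_inv_Rm : Um⁻¹ * Rm = S := by rw [Um, Rm]; group

lemma Rm_inv_Um_sq : Rm⁻¹ * (Um * Um) = T := by rw [Um, Rm]; group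

lemma hom_compare : (π.comp φ) = liftφ.comp (pQ.comp qh) := by
  apply PresentedGroup.ext
  intro b
  cases b
  · show π (φ σ₂) = liftφ (pQ (qh σ₂))
    rw [phi_σ₂, qh_σ₂, pQ_σQ₂, _root_.map_mul, map_inv, _root_.map_mul]
    have hA : liftφ Agen = π Rm := by
      rw [liftφ, Agen, Monoid.CoprodI.lift_of]
      exact (cycHom_int (π Rm) pRm_sq 1).trans (zpow_one _)
    have hB : liftφ Bgen = π Um := by
      rw [liftφ, Bgen, Monoid.CoprodI.lift_of]
      exact (cycHom_int (π Um) pUm_cube 1).trans (zpow_one _)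
    rw [hA, hB, ← map_inv, ← _root_.map_mul, ← _root_.map_mul, Rm_inv_Um_sq]
  · show π (φ σ₁) = liftφ (pQ (qh σ₁))
    rw [phi_σ₁, qh_σ₁, pQ_σQ₁, _root_.map_mul, map_inv]
    have hA : liftφ Agen = π Rm := by
      rw [liftφ, Agen, Monoid.CoprodI.lift_of]
      exact (cycHom_int (π Rm) pRm_sq 1).trans (zpow_one _)
    have hB : liftφ Bgen = π Um := by
      rw [liftφ, Bgen, Monoid.CoprodI.lift_of]
      exact (cycHom_int (π Um) pUm_cube 1).trans (zpow_one _)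
    rw [hA, hB, ← map_inv, ← _root_.map_mul, Um_inv_Rm]

lemma qh_mk (x : FreeGroup Bool) :
    qh (PresentedGroup.mk braidRels x) = PresentedGroup.mk qRels x := by
  have h : qh.comp (PresentedGroup.mk braidRels) = PresentedGroup.mk qRels := by
    apply FreeGroup.ext_hom
    intro a
    show qh (PresentedGroup.of a) = PresentedGroup.of a
    exact PresentedGroup.toGroup.of _
  exact DFunLike.congr_fun h x

lemma ker_φ {w : B3} (hw : φ w = 1) : ∃ m : ℤ, w = Δ ^ (4 * m) := by
  -- step 1 : q w = 1
  have h1 : liftφ (pQ (qh w)) = 1 := by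
    have h := DFunLike.congr_fun hom_compare w
    simp only [MonoidHom.comp_apply] at h
    rw [← h, hw, _root_.map_one]
  have h2 : pQ (qh w) = 1 := liftφ_inj (by rw [h1, _root_.map_one])
  have h3 : qh w = 1 := by
    have := congrArg ρc h2
    rwa [ρc_pQ, _root_.map_one] at this
  -- step 2 : w is a power of Δ²
  obtain ⟨x, rfl⟩ := PresentedGroup.mk_surjective braidRels w
  rw [qh_mk] at h3
  have hx : x ∈ Subgroup.normalClosure qRels := (QuotientGroup.eq_one_iff _).mp h3
  have hw2 : PresentedGroup.mk braidRels x ∈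
      (Subgroup.normalClosure qRels).map (PresentedGroup.mk braidRels) :=
    ⟨x, hx, rfl⟩
  rw [Subgroup.map_normalClosure _ _ (PresentedGroup.mk_surjective braidRels)] at hw2
  have hle : Subgroup.normalClosure ((PresentedGroup.mk braidRels) '' qRels) ≤
      Subgroup.zpowers (Δ ^ 2) := by
    apply Subgroup.normalClosure_le_normal
    rintro y ⟨r, hr, rfl⟩
    rcases hr with hr | hr
    · have : PresentedGroup.mk braidRels r = 1 :=
        (QuotientGroup.eq_one_iff _).mpr (Subgroup.subset_normalClosure hr)
      rw [this]
      exact Subgroup.one_mem _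
    · simp only [Set.mem_singleton_iff] at hr
      subst hr
      have : PresentedGroup.mk braidRels (DW ^ 2) = Δ ^ 2 := by
        rw [map_pow, DW, _root_.map_mul, _root_.map_mul]
        rfl
      rw [this]
      exact Subgroup.mem_zpowers _
  rcases Subgroup.mem_zpowers_iff.mp (hle hw2) with ⟨k, hk⟩
  -- step 3 : the power is even
  have hφ : W ^ k = 1 := by
    have := congrArg φ hk
    rw [map_zpow, phi_Δsq, hw] at this
    exact this
  have hkeven : ∃ m : ℤ, k = 2 * m := by
    rcases Int.even_or_odd k with ⟨m, hm⟩ | ⟨m, hm⟩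
    · exact ⟨m, by omega⟩
    · exfalso
      apply W_ne_one
      rw [hm, _root_.zpow_add, _root_.zpow_mul, W_zpow_two, _root_.one_zpow, one_mul, zpow_one] at hφ
      exact hφ
  rcases hkeven with ⟨m, rfl⟩
  refine ⟨m, ?_⟩
  rw [← hk, ← zpow_natCast Δ 2, ← _root_.zpow_mul]
  congr 1
  norm_num
  ring

/-! ### Surjectivity of φ -/

def Sinv : SL2Z := ⟨!![1, -1; 0, 1], by norm_num [Matrix.det_fin_two_of]⟩

lemma S_inv_eq : S⁻¹ = Sinv := by
  apply inv_eq_of_mul_eq_one_right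
  ext i j
  show ((S : Matrix (Fin 2) (Fin 2) ℤ) * (Sinv : Matrix (Fin 2) (Fin 2) ℤ)) i j = _
  fin_cases i <;> fin_cases j <;>
    simp [S, Sinv, Matrix.mul_apply, Fin.sum_univ_succ, Matrix.SpecialLinearGroup.coe_one]

lemma Spow (n : ℤ) : ((S ^ n : SL2Z) : Matrix (Fin 2) (Fin 2) ℤ) = !![1, n; 0, 1] := by
  induction n using Int.induction_on with
  | zero =>
    rw [zpow_zero]
    ext i j
    fin_cases i <;> fin_cases j <;> simp [Matrix.SpecialLinearGroup.coe_one]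
  | succ k ih =>
    rw [_root_.zpow_add_one]
    have : ((S ^ (k:ℤ) * S : SL2Z) : Matrix (Fin 2) (Fin 2) ℤ) =
        ((S ^ (k:ℤ) : SL2Z) : Matrix (Fin 2) (Fin 2) ℤ) * (S : Matrix (Fin 2) (Fin 2) ℤ) := rfl
    rw [this, ih]
    ext i j
    fin_cases i <;> fin_cases j <;> simp [S, Matrix.mul_apply, Fin.sum_univ_succ] <;> ring
  | pred k ih =>
    rw [sub_eq_add_neg, _root_.zpow_add, _root_.zpow_neg_one, S_inv_eq]
    have : ((S ^ (-(k:ℤ)) * Sinv : SL2Z) : Matrix (Fin 2) (Fin 2) ℤ) =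
        ((S ^ (-(k:ℤ)) : SL2Z) : Matrix (Fin 2) (Fin 2) ℤ) * (Sinv : Matrix (Fin 2) (Fin 2) ℤ) := rfl
    rw [this, ih]
    ext i j
    fin_cases i <;> fin_cases j <;>
      simp [Sinv, Matrix.mul_apply, Fin.sum_univ_succ] <;> ring

lemma phi_range (M : SL2Z) : M ∈ φ.range := by
  have hS : S ∈ φ.range := ⟨σ₁, phi_σ₁⟩
  have hT : T ∈ φ.range := ⟨σ₂, phi_σ₂⟩
  have hR : Rm ∈ φ.range := by rw [Rm]; exact mul_mem (mul_mem hS hT) hS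
  have hW : W ∈ φ.range := by rw [← Rm_sq]; exact pow_mem hR 2
  suffices h : ∀ n : ℕ, ∀ M : SL2Z, ((M : Matrix (Fin 2) (Fin 2) ℤ) 1 0).natAbs = n →
      M ∈ φ.range from h _ M rfl
  intro n
  induction n using Nat.strong_induction_on with
  | _ n ih =>
    intro M hM
    by_cases hc : (M : Matrix (Fin 2) (Fin 2) ℤ) 1 0 = 0
    · -- lower-left entry is zero
      have hdet : (M : Matrix (Fin 2) (Fin 2) ℤ).det = 1 := M.2
      rw [Matrix.det_fin_two, hc] at hdet
      simp only [mul_zero, sub_zero] at hdet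
      set b : ℤ := (M : Matrix (Fin 2) (Fin 2) ℤ) 0 1 with hb
      rcases Int.mul_eq_one_iff_eq_one_or_neg_one.mp hdet with ⟨ha1, hd1⟩ | ⟨ha1, hd1⟩
      · have hMeq : M = S ^ b := by
          ext i j
          rw [Spow]
          fin_cases i <;> fin_cases j <;>
            simp only [Matrix.cons_val_zero, Matrix.cons_val_one, Matrix.head_cons] <;>
            first
              | exact ha1
              | exact hb.symm
              | exact hc
              | exact hd1
        rw [hMeq]
        exact zpow_mem hS b
      · have hWS : ((W * S ^ (-b) : SL2Z) : Matrix (Fin 2) (Fin 2) ℤ) = !![-1, b; 0, -1] := by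
          have e : ((W * S ^ (-b) : SL2Z) : Matrix (Fin 2) (Fin 2) ℤ) =
              (W : Matrix (Fin 2) (Fin 2) ℤ) * ((S ^ (-b) : SL2Z) : Matrix (Fin 2) (Fin 2) ℤ) := rfl
          rw [e, Spow]
          ext i j
          fin_cases i <;> fin_cases j <;>
            simp [W, Matrix.mul_apply, Fin.sum_univ_succ]
        have hMeq : M = W * S ^ (-b) := by
          ext i j
          rw [hWS]
          fin_cases i <;> fin_cases j <;>
            simp only [Matrix.cons_val_zero, Matrix.cons_val_one, Matrix.head_cons] <;>
            first
              | exact ha1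
              | exact hb.symm
              | exact hc
              | exact hd1
        rw [hMeq]
        exact mul_mem hW (zpow_mem hS (-b))
    · -- Euclidean step
      set a : ℤ := (M : Matrix (Fin 2) (Fin 2) ℤ) 0 0 with ha
      set c : ℤ := (M : Matrix (Fin 2) (Fin 2) ℤ) 1 0 with hcdef
      have h0 : a % c = a - c * (a / c) := Int.emod_def a c
      have h1 : 0 ≤ a % c := Int.emod_nonneg a hc
      have h2 : a % c < |c| := by
        rcases lt_or_gt_of_ne hc with h | h
        · rw [← Int.emod_neg, abs_of_neg h]
          exact Int.emod_lt_of_pos a (by omega)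
        · rw [abs_of_pos h]
          exact Int.emod_lt_of_pos a h
      set q : ℤ := a / c with hq
      set N : SL2Z := Rm * (S ^ (-q) * M) with hN
      have hN10 : (N : Matrix (Fin 2) (Fin 2) ℤ) 1 0 = -(a % c) := by
        have e : (N : Matrix (Fin 2) (Fin 2) ℤ) =
            (Rm : Matrix (Fin 2) (Fin 2) ℤ) *
              (((S ^ (-q) : SL2Z) : Matrix (Fin 2) (Fin 2) ℤ) * (M : Matrix (Fin 2) (Fin 2) ℤ)) := rfl
        rw [e, Rm_coe, Spow]
        simp [Matrix.mul_apply, Fin.sum_univ_succ, Matrix.vecMul, dotProduct,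
          ← ha, ← hcdef]
        rw [h0]
        ring
      have hNlt : ((N : Matrix (Fin 2) (Fin 2) ℤ) 1 0).natAbs < n := by
        rw [hN10, ← hM]
        have h2' : a % c < (c.natAbs : ℤ) := by rwa [Int.abs_eq_natAbs] at h2
        omega
      have hNmem : N ∈ φ.range := ih _ hNlt N rfl
      have hMN : M = S ^ q * (Rm⁻¹ * N) := by
        rw [hN]
        group
      rw [hMN]
      exact mul_mem (zpow_mem hS q) (mul_mem (inv_mem hR) hNmem)

lemma phi_surjective : Function.Surjective φ := fun M => phi_range M

/-! ### Final assembly -/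

lemma map_mk (f : B3 →* SL2Z) (a : B3) :
    ConjClasses.map f (ConjClasses.mk a) = ConjClasses.mk (f a) := rfl

lemma expSum_mul (g h : B3) : expSum (g * h) = expSum g + expSum h := by
  simp [expSum, _root_.map_mul]

lemma expSum_zpow_Δ (m : ℤ) : expSum (Δ ^ m) = 3 * m := by
  have : ε (Δ ^ m) = (ε Δ) ^ m := map_zpow ε Δ m
  rw [expSum, this]
  rw [toAdd_zpow]
  have := expSum_Δ
  rw [expSum] at this
  rw [this, smul_eq_mul]
  ring

lemma expSum_conj (c g : B3) : expSum (c * g * c⁻¹) = expSum g := by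
  rw [expSum_mul, expSum_mul]
  have : expSum c⁻¹ = -expSum c := by simp [expSum]
  rw [this]
  ring

lemma Rm_four : Rm ^ 4 = 1 := by
  rw [show (4 : ℕ) = 2 * 2 from rfl, pow_mul, Rm_sq, W_sq]

lemma phi_Δ4 (m : ℤ) : φ (Δ ^ (4 * m)) = 1 := by
  rw [map_zpow, phi_Δ, _root_.zpow_mul, show (4:ℤ) = ((4:ℕ):ℤ) from rfl, zpow_natCast, Rm_four,
    _root_.one_zpow]

lemma trB_eq (g : B3) : trB g = Matrix.trace (φ g : Matrix (Fin 2) (Fin 2) ℤ) := rfl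

/-- The set of conjugacy classes in B₃ of trace t and exponent sum n. -/
def Xset (t n : ℤ) : Set (ConjClasses B3) :=
  {c | ∃ g : B3, ConjClasses.mk g = c ∧ trB g = t ∧ expSum g = n}

/-- The set of conjugacy classes in SL₂(ℤ) of trace t. -/
def Yset (t : ℤ) : Set (ConjClasses SL2Z) :=
  {c | ∃ m : SL2Z, ConjClasses.mk m = c ∧
    Matrix.trace (m : Matrix (Fin 2) (Fin 2) ℤ) = t}

/-- φ induces a bijection from the disjoint union ∐_{j=0}^{11} X_{t,n+j} onto Y_t;
in particular, its restriction to each X_{t,n} is injective. -/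
theorem stmt9 (t n : ℤ) :
    Set.BijOn (ConjClasses.map φ) (⋃ j ∈ Finset.range 12, Xset t (n + j)) (Yset t) ∧
      Set.InjOn (ConjClasses.map φ) (Xset t n) := by
  -- injectivity on the union
  have hinjU : Set.InjOn (ConjClasses.map φ) (⋃ j ∈ Finset.range 12, Xset t (n + j)) := by
    intro c1 hc1 c2 hc2 heq
    simp only [Set.mem_iUnion, Finset.mem_range] at hc1 hc2
    obtain ⟨j1, hj1, g, rfl, htg, heg⟩ := hc1
    obtain ⟨j2, hj2, h, rfl, hth, heh⟩ := hc2
    rw [map_mk, map_mk, ConjClasses.mk_eq_mk_iff_isConj] at heq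
    obtain ⟨u, hu⟩ := isConj_iff.mp heq
    obtain ⟨e, rfl⟩ := phi_surjective u
    have hd : φ (h * (e * g * e⁻¹)⁻¹) = 1 := by
      rw [_root_.map_mul, map_inv, _root_.map_mul, _root_.map_mul, map_inv, hu]
      simp
    obtain ⟨m, hm⟩ := ker_φ hd
    have hh : h = Δ ^ (4 * m) * (e * g * e⁻¹) := by
      have := congrArg (fun x => x * (e * g * e⁻¹)) hm
      simpa [mul_assoc] using this
    have hes : expSum h = 3 * (4 * m) + expSum g := by
      rw [hh, expSum_mul, expSum_zpow_Δ, expSum_conj]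
    have hm0 : m = 0 := by
      rw [heg, heh] at hes
      omega
    rw [hm0] at hh
    simp only [mul_zero, zpow_zero, one_mul] at hh
    rw [ConjClasses.mk_eq_mk_iff_isConj]
    rw [hh]
    exact isConj_iff.mpr ⟨e, rfl⟩
  refine ⟨⟨?_, hinjU, ?_⟩, ?_⟩
  · -- MapsTo
    intro c hc
    simp only [Set.mem_iUnion, Finset.mem_range] at hc
    obtain ⟨j, hj, g, rfl, htg, heg⟩ := hc
    exact ⟨φ g, (map_mk φ g).symm, htg⟩
  · -- SurjOn
    intro c hc
    obtain ⟨M, rfl, htr⟩ := hc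
    obtain ⟨g, rfl⟩ := phi_surjective M
    set e : ℤ := expSum g with he
    set r : ℤ := (e - n) % 12 with hr
    set k : ℤ := (e - n) / 12 with hk
    have h0r : 0 ≤ r := Int.emod_nonneg _ (by norm_num)
    have hr12 : r < 12 := Int.emod_lt_of_pos _ (by norm_num)
    have hdm : e - n = 12 * k + r := by rw [hr, hk]; omega
    refine ⟨ConjClasses.mk (g * Δ ^ (4 * (-k))), ?_, ?_⟩
    · simp only [Set.mem_iUnion, Finset.mem_range]
      refine ⟨r.toNat, by omega, g * Δ ^ (4 * (-k)), rfl, ?_, ?_⟩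
      · show Matrix.trace ((φ (g * Δ ^ (4 * (-k))) : SL2Z) : Matrix (Fin 2) (Fin 2) ℤ) = t
        rw [_root_.map_mul, phi_Δ4, mul_one]
        exact htr
      · rw [expSum_mul, expSum_zpow_Δ]
        have hrt : ((r.toNat : ℤ)) = r := Int.toNat_of_nonneg h0r
        rw [← he, hrt]
        omega
    · rw [map_mk, _root_.map_mul, phi_Δ4, mul_one]
  · -- InjOn on Xset t n
    apply hinjU.mono
    intro c hc
    simp only [Set.mem_iUnion, Finset.mem_range]
    exact ⟨0, by norm_num, by simpa using hc⟩
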